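/- There exists a K-linear map l : R → K such that: (i) l is nondegenerate, i.e. if λ ∈ R satisfies l(λ·ρ) = 0 for all ρ ∈ R then λ = 0; and (ii) l(σ(ρ)) = ε·l(ρ) for all ρ ∈ R, where ε = -1 if deg q ≥ 2 and ε = (-1)^{m+1} if deg q = 1. -/

import Mathlib

open Polynomial

set_option maxHeartbeats 1000000 in
theorem aux_12 {K : Type*} [Field K] (hchar : (2 : K) ≠ 0)
    (q : K[X]) (hq : q.Monic) (hirr : Irreducible q)
    (c : K) (hrev : q.reverse = c • q) (m : ℕ) (hm : 1 ≤ m)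
    (I : Ideal K[X]) (hI : I = Ideal.span {q ^ m})
    (σ : (K[X] ⧸ I) ≃ₐ[K] (K[X] ⧸ I))
    (hσ : σ (Ideal.Quotient.mk I X) * Ideal.Quotient.mk I X = 1)
    (ε : K) (hε : (2 ≤ q.natDegree ∧ ε = -1) ∨ (q.natDegree = 1 ∧ ε = (-1) ^ (m + 1))) :
    ∃ l : (K[X] ⧸ I) →ₗ[K] K,
      (∀ lam, (∀ ρ, l (lam * ρ) = 0) → lam = 0) ∧
      (∀ ρ, l (σ ρ) = ε * l ρ) := by
  set mk : K[X] →+* (K[X] ⧸ I) := Ideal.Quotient.mk I with hmkdef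
  set ξ : K[X] ⧸ I := mk X with hξ
  set η : K[X] ⧸ I := σ ξ with hη
  have hηξ : η * ξ = 1 := hσ
  have hξη : ξ * η = 1 := by rw [mul_comm]; exact hσ
  have hmk : ∀ f : K[X], mk f = aeval ξ f := by
    intro f
    have h0 : (Ideal.Quotient.mkₐ K I) = (aeval ξ : K[X] →ₐ[K] (K[X] ⧸ I)) := by
      apply Polynomial.algHom_ext; simp [hξ]; rfl
    have h2 : (Ideal.Quotient.mkₐ K I) f = aeval ξ f := by rw [h0]
    simpa using h2
  have hσf : ∀ f : K[X], σ (mk f) = aeval η f := by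
    intro f
    rw [hmk, ← aeval_algHom_apply σ ξ f]
  have hση : σ η = ξ := by
    have h1 : σ η * η = 1 := by
      have := congrArg σ hηξ
      rw [map_mul, map_one] at this
      rw [← hη] at this; exact this
    calc σ η = σ η * (η * ξ) := by rw [hηξ, mul_one]
    _ = (σ η * η) * ξ := by ring
    _ = ξ := by rw [h1, one_mul]
  have hσσ : ∀ ρ : K[X] ⧸ I, σ (σ ρ) = ρ := by
    intro ρ
    obtain ⟨f, rfl⟩ := Ideal.Quotient.mk_surjective (I := I) ρ
    rw [show (Ideal.Quotient.mk I) f = mk f from rfl, hσf, ← aeval_algHom_apply σ η f, hση, hmk]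
  -- coefficient facts
  have hc0 : q.coeff 0 = c := by
    have := congrArg (fun p => Polynomial.coeff p q.natDegree) hrev
    simp only [coeff_smul, coeff_reverse, revAt_le (le_refl q.natDegree), Nat.sub_self,
      smul_eq_mul] at this
    rwa [hq.coeff_natDegree, mul_one] at this
  have hcc : c * c = 1 := by
    have := congrArg (fun p => Polynomial.coeff p 0) hrev
    simp only [coeff_smul, coeff_reverse, smul_eq_mul] at this
    rw [revAt_le (Nat.zero_le _), Nat.sub_zero, hq.coeff_natDegree, hc0] at this
    exact this.symm
  -- invertibility of ξ and σ (mk q)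
  have hσq : σ (mk q) = c • (η ^ q.natDegree * mk q) := by
    letI : Invertible ξ := ⟨η, hηξ, hξη⟩
    have hinv : (⅟ξ : K[X] ⧸ I) = η := rfl
    have key := eval₂_reverse_mul_pow (algebraMap K (K[X] ⧸ I)) ξ q
    rw [hinv, hrev, ← aeval_def, ← aeval_def, map_smul] at key
    have key2 : c • (aeval η q * ξ ^ q.natDegree) = mk q := by
      rw [hmk q, ← key, smul_mul_assoc]
    have key3 : aeval η q * ξ ^ q.natDegree = c • mk q := by
      have := congrArg (fun z => c • z) key2
      simpa [smul_smul, hcc] using this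
    rw [hσf q]
    calc aeval η q = aeval η q * (ξ ^ q.natDegree * η ^ q.natDegree) := by
          rw [← mul_pow, hξη, one_pow, mul_one]
    _ = (aeval η q * ξ ^ q.natDegree) * η ^ q.natDegree := by ring
    _ = (c • mk q) * η ^ q.natDegree := by rw [key3]
    _ = c • (η ^ q.natDegree * mk q) := by rw [smul_mul_assoc, mul_comm]
  -- Q and its powers
  set Q : K[X] ⧸ I := mk q with hQ
  have hQm : (Q : K[X] ⧸ I) ^ m = 0 := by
    rw [hQ, ← map_pow]
    exact Ideal.Quotient.eq_zero_iff_mem.mpr (hI ▸ Ideal.subset_span (Set.mem_singleton _))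
  have hσQpow : σ (Q ^ (m-1)) = c ^ (m-1) • (η ^ (q.natDegree * (m-1)) * Q ^ (m-1)) := by
    rw [map_pow, hσq, _root_.smul_pow, mul_pow, ← pow_mul]
  -- the residue map π to K[X]/(q)
  have hle : I ≤ Ideal.span {q} := by
    rw [hI]
    exact Ideal.span_singleton_le_span_singleton.mpr (dvd_pow_self q (by omega))
  set π : (K[X] ⧸ I) →+* (K[X] ⧸ Ideal.span {q}) := Ideal.Quotient.factor hle with hπdef
  have hπ : ∀ f : K[X], π (mk f) = Ideal.Quotient.mk (Ideal.span {q}) f := fun f =>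
    Ideal.Quotient.factor_mk hle f
  have hqne : q ≠ 0 := hq.ne_zero
  have hnz : ∀ x : K[X] ⧸ I, π x ≠ 0 → Q ^ (m-1) * x ≠ 0 := by
    intro x hx hcon
    obtain ⟨f, rfl⟩ := Ideal.Quotient.mk_surjective (I := I) x
    have h0 : mk (q ^ (m-1) * f) = 0 := by rw [map_mul, map_pow]; exact hcon
    rw [Ideal.Quotient.eq_zero_iff_mem, hI, Ideal.mem_span_singleton] at h0
    have hqmf : q ^ (m-1) * q ∣ q ^ (m-1) * f := by
      rw [← pow_succ]
      have : m - 1 + 1 = m := by omega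
      rwa [this]
    have hqf : q ∣ f := (mul_dvd_mul_iff_left (pow_ne_zero (m-1) hqne)).mp hqmf
    exact hx (by rw [hπ f, Ideal.Quotient.eq_zero_iff_mem, Ideal.mem_span_singleton]; exact hqf)
  -- factorization lemma: any nonzero lam divides everything in the socle
  have hfactor : ∀ lam : K[X] ⧸ I, lam ≠ 0 → ∀ x : K[X] ⧸ I, ∃ ρ, lam * ρ = Q ^ (m-1) * x := by
    intro lam hlam x
    obtain ⟨f, rfl⟩ := Ideal.Quotient.mk_surjective (I := I) lam
    have hfne : ¬ q ^ m ∣ f := by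
      intro hd
      exact hlam (by rw [show (Ideal.Quotient.mk I) f = mk f from rfl,
        Ideal.Quotient.eq_zero_iff_mem, hI, Ideal.mem_span_singleton]; exact hd)
    have hf0 : f ≠ 0 := by rintro rfl; exact hfne (dvd_zero _)
    obtain ⟨g, hfg, hg⟩ :=
      (FiniteMultiplicity.of_prime_left hirr.prime hf0).exists_eq_pow_mul_and_not_dvd
    set i := multiplicity q f with hi
    have him : i < m := by
      by_contra hge
      exact hfne (dvd_trans (pow_dvd_pow q (by omega)) ⟨g, hfg⟩)
    have hcop : IsCoprime (q ^ m) g := ((hirr.coprime_iff_not_dvd).mpr hg).pow_left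
    obtain ⟨u, v, huv⟩ := hcop
    have hQm0 : mk (q ^ m) = 0 :=
      Ideal.Quotient.eq_zero_iff_mem.mpr (hI ▸ Ideal.subset_span (Set.mem_singleton _))
    have hvg : mk v * mk g = 1 := by
      calc mk v * mk g = mk u * mk (q ^ m) + mk v * mk g := by rw [hQm0, mul_zero, zero_add]
      _ = mk (u * q ^ m + v * g) := by rw [map_add, map_mul, map_mul]
      _ = 1 := by rw [huv, map_one]
    refine ⟨mk (q ^ (m - 1 - i)) * x * mk v, ?_⟩
    have hsplit : q ^ i * q ^ (m - 1 - i) = q ^ (m - 1) := by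
      rw [← pow_add]; congr 1; omega
    calc (Ideal.Quotient.mk I) f * (mk (q ^ (m - 1 - i)) * x * mk v)
        = (mk (q ^ i) * mk (q ^ (m-1-i))) * (mk g * mk v) * x := by
          rw [show (Ideal.Quotient.mk I) f = mk f from rfl, hfg, map_mul]; ring
    _ = mk (q ^ (m-1)) * x := by rw [← map_mul, hsplit, mul_comm (mk g) (mk v), hvg, mul_one]
    _ = Q ^ (m-1) * x := by rw [map_pow]
  -- ε is a sign
  have hεε : ε * ε = 1 := by
    rcases hε with ⟨-, rfl⟩ | ⟨-, rfl⟩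
    · ring
    · rw [← mul_pow]; norm_num
  -- construct the eigenvector in the socle
  obtain ⟨x, hs0ne, hs0σ⟩ : ∃ x : K[X] ⧸ I,
      Q ^ (m-1) * x ≠ 0 ∧ σ (Q ^ (m-1) * x) = ε • (Q ^ (m-1) * x) := by
    rcases hε with ⟨h2, hεv⟩ | ⟨h1, hεv⟩
    · -- deg q ≥ 2
      set A : K[X] ⧸ I := c ^ (m-1) • η ^ (q.natDegree * (m-1)) with hA
      have hσA : σ A = c ^ (m-1) • ξ ^ (q.natDegree * (m-1)) := by
        rw [hA, map_smul, map_pow, hση]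
      have hAσA : A * σ A = 1 := by
        rw [hσA, hA, smul_mul_smul_comm, ← mul_pow, ← mul_pow, hcc, hηξ, one_pow, one_pow,
          one_smul]
      have hb : ∃ b : K[X] ⧸ I, π (b - A * σ b) ≠ 0 := by
        by_contra hco
        push_neg at hco
        have h1 : ∀ b, π b = π A * π (σ b) := by
          intro b
          have := hco b
          rwa [map_sub, map_mul, sub_eq_zero] at this
        have hA1 : π A = 1 := by
          have h := h1 1
          simp only [map_one, mul_one] at h
          exact h.symm
        have hπξη : π ξ = π η := by
          have h := h1 ξ
          rwa [hA1, one_mul, ← hη] at h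
        have hππ : π ξ * π ξ = 1 := by
          nth_rewrite 2 [hπξη]
          calc π ξ * π η = π (ξ * η) := (map_mul π ξ η).symm
          _ = 1 := by rw [hξη, map_one]
        have hzero : Ideal.Quotient.mk (Ideal.span {q}) (X * X - 1) = 0 := by
          rw [map_sub, map_mul, map_one, ← hπ X]
          rw [show (π ξ : K[X] ⧸ Ideal.span {q}) * π ξ = 1 from hππ]
          exact sub_self 1
        have hdvd : q ∣ (X * X - 1 : K[X]) := by
          rwa [Ideal.Quotient.eq_zero_iff_mem, Ideal.mem_span_singleton] at hzero
        have hfac : (X * X - 1 : K[X]) = (X - C 1) * (X - C (-1)) := by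
          simp only [map_one, map_neg]
          ring
        rcases hirr.prime.2.2 _ _ (hfac ▸ hdvd) with hd | hd
        · have := Polynomial.natDegree_le_of_dvd hd (X_sub_C_ne_zero 1)
          rw [natDegree_X_sub_C] at this
          omega
        · have := Polynomial.natDegree_le_of_dvd hd (X_sub_C_ne_zero (-1))
          rw [natDegree_X_sub_C] at this
          omega
      obtain ⟨b, hbne⟩ := hb
      refine ⟨b - A * σ b, hnz _ hbne, ?_⟩
      have hσx : σ (b - A * σ b) = σ b - σ A * b := by rw [map_sub, map_mul, hσσ]
      have hAx : A * (σ b - σ A * b) = -(b - A * σ b) := by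
        rw [mul_sub, ← mul_assoc, hAσA, one_mul]
        ring
      calc σ (Q ^ (m-1) * (b - A * σ b))
          = σ (Q ^ (m-1)) * σ (b - A * σ b) := map_mul σ _ _
      _ = σ (Q ^ (m-1)) * (σ b - σ A * b) := by rw [hσx]
      _ = Q ^ (m-1) * (A * (σ b - σ A * b)) := by
          rw [hσQpow, smul_mul_assoc, hA, smul_mul_assoc, mul_smul_comm]
          congr 1
          ring
      _ = Q ^ (m-1) * (-(b - A * σ b)) := by rw [hAx]
      _ = ε • (Q ^ (m-1) * (b - A * σ b)) := by
          rw [hεv, neg_one_smul]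
          ring
    · -- deg q = 1
      haveI : Nontrivial (K[X] ⧸ Ideal.span {q}) :=
        Ideal.Quotient.nontrivial_iff.mpr (by
          rw [Ne, Ideal.span_singleton_eq_top]
          exact hirr.not_isUnit)
      have hπ1 : π (1 : K[X] ⧸ I) ≠ 0 := by
        rw [map_one]
        exact one_ne_zero
      have hqX : q = X + C c := by
        have := Polynomial.eq_X_add_C_of_natDegree_le_one (le_of_eq h1)
        rwa [show q.coeff 1 = 1 from by rw [← h1]; exact hq.coeff_natDegree, map_one, one_mul,
          hc0] at this
      have hmm' : m - 1 + 1 = m := by omega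
      have hCc : mk (C c) = algebraMap K (K[X] ⧸ I) c := by
        rw [hmk (C c)]
        simp
      have hqm0 : mk (q ^ m) = 0 :=
        Ideal.Quotient.eq_zero_iff_mem.mpr (hI ▸ Ideal.subset_span (Set.mem_singleton _))
      have hQξ : Q ^ (m-1) * ξ = (-c) • Q ^ (m-1) := by
        have hX : (X : K[X]) = q - C c := by rw [hqX]; ring
        have hpoly : q ^ (m-1) * X = q ^ m - C c * q ^ (m-1) := by
          rw [hX, mul_sub, ← pow_succ, hmm']
          ring
        have hmkp := congrArg mk hpoly
        rw [map_mul, map_sub, map_mul, hqm0, zero_sub, map_pow, hCc,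
          ← Algebra.smul_def] at hmkp
        rw [show (Ideal.Quotient.mk I) q = Q from rfl] at hmkp
        rw [hmkp, neg_smul]
      have hηQ : η * Q ^ (m-1) = (-c) • Q ^ (m-1) := by
        have h2 : ξ * ((-c) • Q ^ (m-1)) = Q ^ (m-1) := by
          rw [mul_smul_comm, mul_comm, hQξ, smul_smul]
          rw [show (-c) * (-c) = c * c by ring, hcc, one_smul]
        calc η * Q ^ (m-1) = η * (ξ * ((-c) • Q ^ (m-1))) := by rw [h2]
        _ = (η * ξ) * ((-c) • Q ^ (m-1)) := by ring
        _ = (-c) • Q ^ (m-1) := by rw [hηξ, one_mul]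
      have hηk : ∀ k : ℕ, η ^ k * Q ^ (m-1) = ((-c) ^ k) • Q ^ (m-1) := by
        intro k
        induction k with
        | zero => simp
        | succ n ih =>
          calc η ^ (n+1) * Q ^ (m-1) = η ^ n * (η * Q ^ (m-1)) := by ring
          _ = η ^ n * ((-c) • Q ^ (m-1)) := by rw [hηQ]
          _ = (-c) • (η ^ n * Q ^ (m-1)) := by rw [mul_smul_comm]
          _ = (-c) • (((-c) ^ n) • Q ^ (m-1)) := by rw [ih]
          _ = ((-c) ^ (n+1)) • Q ^ (m-1) := by rw [smul_smul, ← pow_succ']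
      refine ⟨1, ?_, ?_⟩
      · exact hnz 1 hπ1
      · rw [mul_one]
        rw [hσQpow, h1, one_mul, hηk (m-1), smul_smul]
        congr 1
        rw [← mul_pow, hεv]
        have hstep : c * (-c) = -1 := by
          rw [show c * (-c) = -(c * c) by ring, hcc]
        rw [hstep]
        have : m + 1 = (m - 1) + 2 := by omega
        rw [this, pow_add]
        norm_num
  -- pick a dual functional not vanishing on the eigenvector
  obtain ⟨l₀, hl₀⟩ : ∃ φ : Module.Dual K (K[X] ⧸ I), φ (Q ^ (m-1) * x) ≠ 0 := by
    by_contra hco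
    push_neg at hco
    exact hs0ne ((Module.forall_dual_apply_eq_zero_iff K _).mp hco)
  refine ⟨l₀ + ε • (l₀ ∘ₗ σ.toLinearMap), ?_, ?_⟩
  · intro lam hlam
    by_contra hne
    obtain ⟨ρ₀, hρ₀⟩ := hfactor lam hne x
    have hz := hlam ρ₀
    rw [hρ₀] at hz
    simp only [LinearMap.add_apply, LinearMap.smul_apply, LinearMap.coe_comp,
      Function.comp_apply, AlgEquiv.toLinearMap_apply, smul_eq_mul] at hz
    rw [hs0σ, map_smul, smul_eq_mul, ← mul_assoc, hεε, one_mul] at hz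
    have h2 : (2 : K) * l₀ (Q ^ (m-1) * x) = 0 := by
      rw [two_mul]
      exact hz
    rcases mul_eq_zero.mp h2 with h | h
    · exact hchar h
    · exact hl₀ h
  · intro ρ
    simp only [LinearMap.add_apply, LinearMap.smul_apply, LinearMap.coe_comp,
      Function.comp_apply, AlgEquiv.toLinearMap_apply, smul_eq_mul]
    rw [hσσ ρ, mul_add, ← mul_assoc, hεε, one_mul, add_comm]

/-- On `R = K[X]/(q^m)` with its involutory automorphism `σ` (induced by `X ↦ X⁻¹`), there is
a nondegenerate `K`-linear form `l : R → K` with `l (σ ρ) = ε * l ρ`, where `ε = -1` if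
`deg q ≥ 2` and `ε = (-1)^(m+1)` if `deg q = 1`. -/
theorem stmt_12 {K : Type*} [Field K] (hchar : (2 : K) ≠ 0)
    (q : K[X]) (hq : q.Monic) (hirr : Irreducible q)
    (c : K) (hrev : q.reverse = c • q) (m : ℕ) (hm : 1 ≤ m)
    (σ : (K[X] ⧸ Ideal.span {q ^ m}) ≃ₐ[K] (K[X] ⧸ Ideal.span {q ^ m}))
    (hσ : σ (Ideal.Quotient.mk (Ideal.span {q ^ m}) X)
        * Ideal.Quotient.mk (Ideal.span {q ^ m}) X = 1)
    (ε : K) (hε : (2 ≤ q.natDegree ∧ ε = -1) ∨ (q.natDegree = 1 ∧ ε = (-1) ^ (m + 1))) :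
    ∃ l : (K[X] ⧸ Ideal.span {q ^ m}) →ₗ[K] K,
      (∀ lam, (∀ ρ, l (lam * ρ) = 0) → lam = 0) ∧
      (∀ ρ, l (σ ρ) = ε * l ρ) := by
  exact aux_12 hchar q hq hirr c hrev m hm (Ideal.span {q ^ m}) rfl σ hσ ε hε
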